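/- arXiv:2502.17042 — 2 statements merged into one kernel-verified Lean document; each statement's English description precedes it below -/
import Mathlib

section
/- Let κ be a strictly positive definite kernel on a set Z and let S = {z_1,…,z_N} be a finite nonempty set of pairwise-distinct points of Z. For every point z̃ ∈ Z, the GP posterior variance Var(z̃ ; S) = κ(z̃,z̃) − κ(z̃,Z) K⁻¹ κ(z̃,Z)ᵀ equals 0 if and only if z̃ ∈ S (i.e., z̃ = z_j for some j ∈ {1,…,N}). -/
open Matrix
open scoped Classical

/-- A strictly positive definite kernel: every Gram matrix built from pairwise-distinct
points is positive definite. -/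
def IsStrictlyPDKernel {Z : Type*} (κ : Z → Z → ℝ) : Prop :=
  ∀ (n : ℕ) (z : Fin n → Z), Function.Injective z →
    (Matrix.of fun i j => κ (z i) (z j)).PosDef

/-- GP posterior variance at a query point `zq`, given the (pairwise-distinct) data points
in the finite set `S`: `κ(z̃,z̃) − k K⁻¹ kᵀ` with `K` the Gram matrix of `S` and `k` the
vector of kernel evaluations between `zq` and the points of `S`. -/
noncomputable def postVar {Z : Type*} (κ : Z → Z → ℝ) (S : Finset Z) (zq : Z) : ℝ :=
  κ zq zq -
    (fun i : S => κ zq (i : Z)) ⬝ᵥ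
      ((Matrix.of fun i j : S => κ (i : Z) (j : Z))⁻¹ *ᵥ fun i : S => κ zq (i : Z))

lemma posdef_submatrix_equiv' {m n : Type*} [Fintype m] [Fintype n]
    {M : Matrix n n ℝ} (hM : M.PosDef) (e : m ≃ n) : (M.submatrix e e).PosDef := by
  refine PosDef.of_dotProduct_mulVec_pos ?_ ?_
  · have h := hM.1
    ext i j
    simpa using (congrFun (congrFun h (e j)) (e i)).symm
  · intro x hx
    have hx' : (fun j => x (e.symm j)) ≠ 0 := by
      intro h
      apply hx
      funext i
      have := congrFun h (e i)
      simpa using this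
    have := hM.dotProduct_mulVec_pos hx'
    convert this using 1
    simp only [dotProduct, mulVec, submatrix_apply]
    rw [← e.symm.sum_comp]
    congr 1
    funext i
    simp only [Equiv.apply_symm_apply]
    congr 1
    rw [← e.symm.sum_comp]
    simp

lemma gram_posdef {Z : Type*} {κ : Z → Z → ℝ} (hκ : IsStrictlyPDKernel κ)
    {ι : Type*} [Fintype ι] (z : ι → Z) (hz : Function.Injective z) :
    (Matrix.of fun i j => κ (z i) (z j)).PosDef := by
  let e := Fintype.equivFin ι
  have h := hκ (Fintype.card ι) (z ∘ e.symm) (hz.comp e.symm.injective)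
  have h2 := posdef_submatrix_equiv' h e
  convert h2 using 1
  ext i j
  simp

/-- For a strictly positive definite kernel and a finite nonempty set `S`
of pairwise-distinct points, the GP posterior variance at a point `z̃` vanishes if and
only if `z̃ ∈ S`. -/
theorem statement6 {Z : Type*} (κ : Z → Z → ℝ) (hκ : IsStrictlyPDKernel κ)
    (S : Finset Z) (hS : S.Nonempty) (zq : Z) :
    postVar κ S zq = 0 ↔ zq ∈ S := by
  set K : Matrix S S ℝ := Matrix.of fun i j : S => κ (i : Z) (j : Z) with hKdef
  set k : S → ℝ := fun i : S => κ zq (i : Z) with hkdef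
  have hK : K.PosDef := gram_posdef hκ (fun i : S => (i : Z)) Subtype.coe_injective
  have hdet : IsUnit K.det := isUnit_iff_ne_zero.mpr hK.det_pos.ne'
  constructor
  · intro h0
    by_contra hzq
    -- extended Gram matrix on S ⊕ Unit
    set w : S ⊕ Unit → Z := Sum.elim (fun i : S => (i : Z)) (fun _ => zq) with hwdef
    have hw : Function.Injective w := by
      rintro (i | u) (j | v) h
      · simp only [w, Sum.elim_inl] at h
        exact congrArg Sum.inl (Subtype.coe_injective h)
      · simp only [w, Sum.elim_inl, Sum.elim_inr] at h
        exact absurd (h ▸ i.2) hzq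
      · simp only [w, Sum.elim_inl, Sum.elim_inr] at h
        exact absurd (h ▸ j.2) hzq
      · simp
    have hM : (Matrix.of fun p q : S ⊕ Unit => κ (w p) (w q)).PosDef := gram_posdef hκ w hw
    have hsym : ∀ i : S, κ ((i : Z)) zq = κ zq (i : Z) := by
      intro i
      have := congrFun (congrFun hM.1 (Sum.inr ())) (Sum.inl i)
      simpa [conjTranspose_apply, w] using this
    set B : Matrix S Unit ℝ := Matrix.of fun i _ => κ (i : Z) zq with hBdef
    set C : Matrix Unit S ℝ := Matrix.of fun _ i => κ zq (i : Z) with hCdef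
    set D : Matrix Unit Unit ℝ := Matrix.of fun _ _ => κ zq zq with hDdef
    have hMeq : (Matrix.of fun p q : S ⊕ Unit => κ (w p) (w q)) = fromBlocks K B C D := by
      ext p q
      rcases p with i | u <;> rcases q with j | v <;> rfl
    haveI : Invertible K := K.invertibleOfIsUnitDet hdet
    have hdetM : 0 < (fromBlocks K B C D).det := hMeq ▸ hM.det_pos
    rw [det_fromBlocks₁₁] at hdetM
    have hschur : 0 < (D - C * ⅟K * B).det := by
      by_contra hc
      push_neg at hc
      nlinarith [hK.det_pos, mul_nonpos_of_nonneg_of_nonpos hK.det_pos.le hc]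
    rw [det_unique] at hschur
    have hentry : (D - C * ⅟K * B) default default = postVar κ S zq := by
      rw [invOf_eq_nonsing_inv]
      simp only [Matrix.sub_apply, hDdef, of_apply, postVar]
      congr 1
      simp only [Matrix.mul_apply, dotProduct, mulVec, hBdef, hCdef, of_apply,
        Finset.sum_mul, Finset.mul_sum]
      rw [Finset.sum_comm]
      refine Finset.sum_congr rfl fun i _ => Finset.sum_congr rfl fun j _ => ?_
      rw [hsym]
      ring
    rw [hentry, h0] at hschur
    exact lt_irrefl 0 hschur
  · intro hmem
    set j : S := ⟨zq, hmem⟩ with hj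
    have hsym : ∀ i : S, κ ((i : Z)) zq = κ zq (i : Z) := by
      intro i
      have := congrFun (congrFun hK.1 j) i
      simpa [conjTranspose_apply, hKdef] using this
    have hk : k = K *ᵥ Pi.single j 1 := by
      funext i
      simp only [mulVec, dotProduct]
      rw [Finset.sum_eq_single j]
      · simp [hKdef, hkdef, hsym i, hj]
      · intro b _ hb
        simp [Pi.single_apply, hb]
      · simp
    have hinv : K⁻¹ *ᵥ k = Pi.single j 1 := by
      rw [hk, mulVec_mulVec, nonsing_inv_mul K hdet, one_mulVec]
    show κ zq zq - k ⬝ᵥ (K⁻¹ *ᵥ k) = 0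
    rw [hinv, dotProduct_single]
    simp [hkdef, hj]
end

section
/- Let X and U be nonempty sets and let f : X → U → X define the discrete-time system x(k+1) = f(x(k), u(k)). Suppose the system is T_d-controllable for some positive integer T_d. Then for any initial state x₀ ∈ X and any M joint anchor points (x̃_1, ũ_1), …, (x̃_M, ũ_M) ∈ X × U, there exist N ≤ M·(T_d + 1) and an input sequence u : {0,…,N−1} → U such that the trajectory x(0) = x₀, x(j+1) = f(x(j), u(j)) satisfies: for every i ∈ {1,…,M} there is some j ∈ {0,…,N−1} with (x(j), u(j)) = (x̃_i, ũ_i). That is, all M anchor joint input-state points are visited by the generated dataset within N ≤ M·(T_d + 1) time steps. -/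
/-- Trajectory of the discrete-time system `x(k+1) = f(x(k), u(k))` starting at `x0`. -/
def traj {X U : Type*} (f : X → U → X) (x0 : X) (u : ℕ → U) : ℕ → X
  | 0 => x0
  | k + 1 => f (traj f x0 u k) (u k)

/-- `Td`-controllability: any state can be driven to any other state in at most `Td`
(and at least one) steps by a suitable input sequence. -/
def Controllable {X U : Type*} (f : X → U → X) (Td : ℕ) : Prop :=
  ∀ x1 x2 : X, ∃ T : ℕ, 1 ≤ T ∧ T ≤ Td ∧ ∃ u : ℕ → U, traj f x1 u T = x2

lemma traj_congr {X U : Type*} (f : X → U → X) (x0 : X) (u v : ℕ → U) (k : ℕ)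
    (h : ∀ j < k, u j = v j) : traj f x0 u k = traj f x0 v k := by
  induction k with
  | zero => rfl
  | succ n ih =>
      simp only [traj, ih (fun j hj => h j (Nat.lt_succ_of_lt hj)),
        h n (Nat.lt_succ_self n)]

lemma traj_add {X U : Type*} (f : X → U → X) (x0 : X) (u : ℕ → U) (a b : ℕ) :
    traj f x0 u (a + b) = traj f (traj f x0 u a) (fun n => u (a + n)) b := by
  induction b with
  | zero => rfl
  | succ n ih =>
      rw [← Nat.add_assoc]
      show f (traj f x0 u (a + n)) (u (a + n)) = _
      rw [ih]; rfl

/-- For a `Td`-controllable system, any initial state and any `M` joint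
anchor points `(x̃ᵢ, ũᵢ)`, there exist `N ≤ M·(Td+1)` and an input sequence whose
trajectory visits all `M` anchor joint input-state points within the first `N` steps. -/
theorem statement9 {X U : Type*} [Nonempty X] [Nonempty U]
    (f : X → U → X) (Td : ℕ) (hTd : 0 < Td) (hctrl : Controllable f Td)
    (x0 : X) {M : ℕ} (anchors : Fin M → X × U) :
    ∃ N : ℕ, N ≤ M * (Td + 1) ∧ ∃ u : ℕ → U,
      ∀ i : Fin M, ∃ j < N, (traj f x0 u j, u j) = anchors i := by
  induction M generalizing x0 with
  | zero =>
      exact ⟨0, Nat.zero_le _, Classical.arbitrary _, fun i => i.elim0⟩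
  | succ M ih =>
      obtain ⟨T, hT1, hTTd, u1, hu1⟩ := hctrl x0 (anchors 0).1
      obtain ⟨N', hN', u2, hu2⟩ := ih (f (anchors 0).1 (anchors 0).2)
        (fun i => anchors i.succ)
      set ua := (anchors 0).2
      refine ⟨T + 1 + N', by
        have : T + 1 ≤ Td + 1 := Nat.add_le_add_right hTTd 1
        calc T + 1 + N' ≤ (Td + 1) + M * (Td + 1) := Nat.add_le_add this hN'
          _ = (M + 1) * (Td + 1) := by ring, ?_⟩
      refine ⟨fun n => if n < T then u1 n else if n = T then ua else u2 (n - (T + 1)), ?_⟩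
      set u : ℕ → U := fun n => if n < T then u1 n else if n = T then ua else u2 (n - (T + 1))
        with hu
      have hshift : ∀ n : ℕ, u (T + 1 + n) = u2 n := by
        intro n
        have h1 : ¬ (T + 1 + n < T) := by omega
        have h2 : ¬ (T + 1 + n = T) := by omega
        simp only [hu, h1, h2, if_false]
        congr 1; omega
      have htrajT : traj f x0 u T = (anchors 0).1 := by
        rw [traj_congr f x0 u u1 T (fun j hj => by simp [hu, hj])]
        exact hu1
      have htrajT1 : traj f x0 u (T + 1) = f (anchors 0).1 ua := by
        simp only [traj, htrajT]; simp [hu]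
      intro i
      rcases Fin.eq_zero_or_eq_succ i with rfl | ⟨i', rfl⟩
      · refine ⟨T, by omega, ?_⟩
        rw [htrajT]; simp [hu, ua]
      · obtain ⟨j, hj, hval⟩ := hu2 i'
        refine ⟨T + 1 + j, by omega, ?_⟩
        have : traj f x0 u (T + 1 + j) = traj f (f (anchors 0).1 ua) u2 j := by
          rw [traj_add, htrajT1]
          exact traj_congr _ _ _ _ _ (fun n _ => hshift n)
        rw [this, hshift j]
        exact hval
end
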